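/- arXiv:1711.01862 — 2 statements merged into one kernel-verified Lean document; each statement's English description precedes it below -/
import Mathlib

section
/- Let Λ be a banded non-negative Toeplitz matrix with bandwidth Ω ∈ ℕ (entries Λ_{(i,j)} = λ_{j-i} ≥ 0 vanishing for |i-j| > Ω, with diagonal entry λ_0 > 0), and let p ∈ (0,∞), q ∈ (0,∞]. Then there exists a constant C > 0 such that for every non-increasing sequence {c_k}_{k∈ℕ} ∈ ℓ_q^p of non-negative numbers, if π_Λ : ℕ → ℕ is any bijection for which the weighted sequence {c^Λ_{π_Λ(k)}}_{k∈ℕ} is non-increasing, then ‖{c_{π_Λ(k)}}_{k=m+1}^∞‖_{ℓ_q^p} ≤ C ‖{c_k}_{k=m+1-Ω}^∞‖_{ℓ_q^p} for all m ≥ Ω. -/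
open scoped ENNReal NNReal
open Finset

noncomputable section

/-- Decreasing rearrangement (0-indexed) of an `ℝ≥0∞`-valued sequence:
`dRearr a i = inf { t : #{k : a k > t} ≤ i }`. -/
def dRearr (a : ℕ → ℝ≥0∞) (i : ℕ) : ℝ≥0∞ :=
  sInf {t : ℝ≥0∞ | ({k : ℕ | t < a k}).encard ≤ (i : ℕ∞)}

/-- Lorentz sequence (quasi-)norm `ℓ_q^τ` (`1`-indexed weights `m^{1/τ}`,
`m = i + 1`). -/
def lorentzNorm (τ : ℝ) (q : ℝ≥0∞) (a : ℕ → ℝ≥0∞) : ℝ≥0∞ :=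
  if q = ∞ then ⨆ i : ℕ, ((i : ℝ≥0∞) + 1) ^ (1 / τ) * dRearr a i
  else (∑' i : ℕ, (((i : ℝ≥0∞) + 1) ^ (1 / τ) * dRearr a i) ^ q.toReal /
        ((i : ℝ≥0∞) + 1)) ^ (1 / q.toReal)

/-- Lorentz norm of a sequence in a normed space (or `ℝ`, `ℂ`). -/
def lorentzNorm' {E : Type*} [NNNorm E] (τ : ℝ) (q : ℝ≥0∞) (c : ℕ → E) : ℝ≥0∞ :=
  lorentzNorm τ q fun k => (‖c k‖₊ : ℝ≥0∞)

/-- The classical `ℓ^τ` norm. -/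
def ellNorm (τ : ℝ) (c : ℕ → ℂ) : ℝ≥0∞ :=
  (∑' k : ℕ, (‖c k‖₊ : ℝ≥0∞) ^ τ) ^ (1 / τ)

/-- A banded non-negative Toeplitz weight with bandwidth `Ω`: entries
`λ_l ≥ 0`, vanishing for `|l| > Ω`, with positive diagonal `λ_0 > 0`. -/
def IsBandedWeight (Ω : ℕ) (lam : ℤ → ℝ) : Prop :=
  (∀ l, 0 ≤ lam l) ∧ 0 < lam 0 ∧ ∀ l : ℤ, (Ω : ℤ) < |l| → lam l = 0

/-- The weighted sequence `c^Λ_k = ∑_{j=k-Ω}^{k+Ω} λ_{j-k} |c_j|`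
(0-indexed; terms with index `j < 0` are treated as `0`). -/
def wSeq (Ω : ℕ) (lam : ℤ → ℝ) (c : ℕ → ℝ) (k : ℕ) : ℝ :=
  ∑ j ∈ Finset.Icc ((k : ℤ) - (Ω : ℤ)) ((k : ℤ) + (Ω : ℤ)),
    lam (j - (k : ℤ)) * (if 0 ≤ j then |c j.toNat| else 0)

variable {X : Type*} [NormedAddCommGroup X] [NormedSpace ℂ X]

/-- A complete dictionary: unit norm elements with dense span. -/
def IsDictionary (g : ℕ → X) : Prop :=
  (∀ k, ‖g k‖ = 1) ∧ Dense (Submodule.span ℂ (Set.range g) : Set X)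

/-- `D = {g_k}` is `ℓ_q^τ`-hilbertian: the reconstruction operator
`R : {c_k} ↦ ∑ c_k g_k` is bounded from `ℓ_q^τ` to `X` (stated on the dense
subspace of finitely supported sequences). -/
def IsHilbertian (g : ℕ → X) (τ : ℝ) (q : ℝ≥0∞) : Prop :=
  ∃ C : ℝ≥0∞, C ≠ ∞ ∧ ∀ c : ℕ → ℂ, (Function.support c).Finite →
    (‖∑ᶠ k, c k • g k‖₊ : ℝ≥0∞) ≤ C * lorentzNorm' τ q c

/-- `{g_k}` with dual system `{g̃_k}` forms an atomic decomposition for `X`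
with respect to `ℓ_q^τ`. -/
def IsAtomicDec (g : ℕ → X) (gd : ℕ → X →L[ℂ] ℂ) (τ : ℝ) (q : ℝ≥0∞) : Prop :=
  (∃ C' C'' : ℝ≥0∞, 0 < C' ∧ C' ≤ C'' ∧ C'' ≠ ∞ ∧ ∀ f : X,
      C' * lorentzNorm' τ q (fun k => gd k f) ≤ (‖f‖₊ : ℝ≥0∞) ∧
      (‖f‖₊ : ℝ≥0∞) ≤ C'' * lorentzNorm' τ q (fun k => gd k f)) ∧
  (∃ CR : ℝ≥0∞, CR ≠ ∞ ∧ ∀ c : ℕ → ℂ, lorentzNorm' τ q c ≠ ∞ →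
      ∃ h : X, HasSum (fun k => c k • g k) h ∧
        (‖h‖₊ : ℝ≥0∞) ≤ CR * lorentzNorm' τ q c) ∧
  (∀ f : X, HasSum (fun k => gd k f • g k) f)

/-- `K_q^τ(D,X,M)`: the `X`-closure of finite combinations `∑_{k∈Δ} c_k g_k`
with `‖{c_k}‖_{ℓ_q^τ} ≤ M`. -/
def KBall (g : ℕ → X) (τ : ℝ) (q : ℝ≥0∞) (M : ℝ≥0∞) : Set X :=
  closure {f : X | ∃ c : ℕ → ℂ, (Function.support c).Finite ∧
    lorentzNorm' τ q c ≤ M ∧ HasSum (fun k => c k • g k) f}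

/-- `K_q^τ(D,X) = ∪_{M>0} K_q^τ(D,X,M)`. -/
def Kset (g : ℕ → X) (τ : ℝ) (q : ℝ≥0∞) : Set X :=
  ⋃ M ∈ {M : ℝ≥0∞ | 0 < M ∧ M ≠ ∞}, KBall g τ q M

/-- `|f|_{K_q^τ(D,X)} = inf { M > 0 : f ∈ K_q^τ(D,X,M) }`. -/
def Ksemi (g : ℕ → X) (τ : ℝ) (q : ℝ≥0∞) (f : X) : ℝ≥0∞ :=
  sInf {M : ℝ≥0∞ | 0 < M ∧ f ∈ KBall g τ q M}

/-- The error of best `m`-term approximation `σ_m(f,D)_X`. -/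
def sigmaE (g : ℕ → X) (m : ℕ) (f : X) : ℝ≥0∞ :=
  ⨅ (s : Finset ℕ) (_ : s.card ≤ m) (c : ℕ → ℂ),
    (‖f - ∑ k ∈ s, c k • g k‖₊ : ℝ≥0∞)

/-- The approximation space norm
`‖f‖_{A_q^α} = ‖{σ_m(f,D)_X}_{m≥1}‖_{ℓ_q^{1/α}} + ‖f‖_X`. -/
def ANorm (g : ℕ → X) (α : ℝ) (q : ℝ≥0∞) (f : X) : ℝ≥0∞ :=
  lorentzNorm (1 / α) q (fun i => sigmaE g (i + 1) f) + ‖f‖₊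

/-- `(∑_{m=1}^∞ [m^α e_m]^q / m)^{1/q}` (`sup_{m ≥ 1} m^α e_m` for `q = ∞`). -/
def errPow (α : ℝ) (q : ℝ≥0∞) (e : ℕ → ℝ≥0∞) : ℝ≥0∞ :=
  if q = ∞ then ⨆ i : ℕ, ((i : ℝ≥0∞) + 1) ^ α * e (i + 1)
  else (∑' i : ℕ, (((i : ℝ≥0∞) + 1) ^ α * e (i + 1)) ^ q.toReal /
        ((i : ℝ≥0∞) + 1)) ^ (1 / q.toReal)

/-- The weighted thresholding seminorm `|f|_{T_q^α(D,X,Λ)}`: infimum over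
reconstruction coefficients `c` and bijections `π` ordering the weighted
coefficients non-increasingly of the error sum for the approximants
`f^Λ_m = ∑_{k=1}^m c_{π(k)} g_{π(k)}`. -/
def TSemi (g : ℕ → X) (Ω : ℕ) (lam : ℤ → ℝ) (α : ℝ) (q : ℝ≥0∞) (f : X) : ℝ≥0∞ :=
  ⨅ (c : ℕ → ℂ) (π : Equiv.Perm ℕ)
    (_ : Antitone fun k => wSeq Ω lam (fun j => ‖c j‖) (π k)),
    errPow α q fun m => (‖f - ∑ k ∈ Finset.range m, c (π k) • g (π k)‖₊ : ℝ≥0∞)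

/-- `‖f‖_{T_q^α(D,X,Λ)} = |f|_{T_q^α(D,X,Λ)} + ‖f‖_X`. -/
def TNorm (g : ℕ → X) (Ω : ℕ) (lam : ℤ → ℝ) (α : ℝ) (q : ℝ≥0∞) (f : X) : ℝ≥0∞ :=
  TSemi g Ω lam α q f + ‖f‖₊

end

section Aux

lemma dRearr_mono {f g : ℕ → ℝ≥0∞} (h : ∀ k, f k ≤ g k) (i : ℕ) :
    dRearr f i ≤ dRearr g i := by
  apply sInf_le_sInf
  intro t ht
  exact le_trans (Set.encard_mono fun k hk => lt_of_lt_of_le hk (h k)) ht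

lemma dRearr_const_mul_le {t : ℝ≥0∞} (ht0 : t ≠ 0) (ht : t ≠ ∞) (g : ℕ → ℝ≥0∞) (i : ℕ) :
    dRearr (fun k => t * g k) i ≤ t * dRearr g i := by
  have key : dRearr (fun k => t * g k) i / t ≤ dRearr g i := by
    apply le_sInf
    intro s hs
    rw [ENNReal.div_le_iff ht0 ht]
    apply sInf_le
    show ({k | s * t < t * g k}).encard ≤ (i : ℕ∞)
    refine le_trans (Set.encard_mono ?_) hs
    intro k hk
    simp only [Set.mem_setOf_eq] at hk ⊢
    by_contra hle
    push_neg at hle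
    exact absurd hk (not_lt.2 (by
      calc t * g k ≤ t * s := mul_le_mul_right hle t
        _ = s * t := mul_comm _ _))
  calc dRearr (fun k => t * g k) i
      = dRearr (fun k => t * g k) i / t * t := (ENNReal.div_mul_cancel ht0 ht).symm
    _ ≤ dRearr g i * t := mul_le_mul_left key t
    _ = t * dRearr g i := mul_comm _ _

lemma lorentzNorm_le_mul {τ : ℝ} {q : ℝ≥0∞} (hq : 0 < q) {t : ℝ≥0∞} (ht : t ≠ ∞)
    {f g : ℕ → ℝ≥0∞} (h : ∀ i, dRearr f i ≤ t * dRearr g i) :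
    lorentzNorm τ q f ≤ t * lorentzNorm τ q g := by
  unfold lorentzNorm
  by_cases hqt : q = ∞
  · simp only [hqt, if_true]
    apply iSup_le
    intro i
    calc ((i : ℝ≥0∞) + 1) ^ (1/τ) * dRearr f i
        ≤ ((i : ℝ≥0∞) + 1) ^ (1/τ) * (t * dRearr g i) := mul_le_mul_right (h i) _
      _ = t * (((i : ℝ≥0∞) + 1) ^ (1/τ) * dRearr g i) := by ring
      _ ≤ t * ⨆ j : ℕ, ((j : ℝ≥0∞) + 1) ^ (1/τ) * dRearr g j :=
          mul_le_mul_right (le_iSup (fun j : ℕ => ((j : ℝ≥0∞) + 1) ^ (1/τ) * dRearr g j) i) t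
  · simp only [hqt, if_false]
    set qr := q.toReal with hqr
    have hqr0 : 0 < qr := ENNReal.toReal_pos hq.ne' hqt
    have step : ∀ i : ℕ, (((i : ℝ≥0∞) + 1) ^ (1/τ) * dRearr f i) ^ qr / ((i : ℝ≥0∞) + 1)
        ≤ t ^ qr * ((((i : ℝ≥0∞) + 1) ^ (1/τ) * dRearr g i) ^ qr / ((i : ℝ≥0∞) + 1)) := by
      intro i
      rw [← mul_div_assoc]
      apply ENNReal.div_le_div_right
      calc (((i : ℝ≥0∞) + 1) ^ (1/τ) * dRearr f i) ^ qr
          ≤ (t * (((i : ℝ≥0∞) + 1) ^ (1/τ) * dRearr g i)) ^ qr := by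
            apply ENNReal.rpow_le_rpow _ hqr0.le
            calc ((i : ℝ≥0∞) + 1) ^ (1/τ) * dRearr f i
                ≤ ((i : ℝ≥0∞) + 1) ^ (1/τ) * (t * dRearr g i) := mul_le_mul_right (h i) _
              _ = t * (((i : ℝ≥0∞) + 1) ^ (1/τ) * dRearr g i) := by ring
        _ = t ^ qr * (((i : ℝ≥0∞) + 1) ^ (1/τ) * dRearr g i) ^ qr :=
            ENNReal.mul_rpow_of_nonneg _ _ hqr0.le
    calc (∑' i : ℕ, (((i : ℝ≥0∞) + 1) ^ (1/τ) * dRearr f i) ^ qr / ((i : ℝ≥0∞) + 1)) ^ (1/qr)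
        ≤ (∑' i : ℕ, t ^ qr *
            ((((i : ℝ≥0∞) + 1) ^ (1/τ) * dRearr g i) ^ qr / ((i : ℝ≥0∞) + 1))) ^ (1/qr) :=
          ENNReal.rpow_le_rpow (ENNReal.tsum_le_tsum step) (by positivity)
      _ = (t ^ qr * ∑' i : ℕ,
            (((i : ℝ≥0∞) + 1) ^ (1/τ) * dRearr g i) ^ qr / ((i : ℝ≥0∞) + 1)) ^ (1/qr) := by
          rw [ENNReal.tsum_mul_left]
      _ = t * (∑' i : ℕ,
            (((i : ℝ≥0∞) + 1) ^ (1/τ) * dRearr g i) ^ qr / ((i : ℝ≥0∞) + 1)) ^ (1/qr) := by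
          rw [ENNReal.mul_rpow_of_nonneg _ _ (by positivity : (0:ℝ) ≤ 1/qr),
            ← ENNReal.rpow_mul, mul_one_div_cancel hqr0.ne', ENNReal.rpow_one]

lemma wSeq_ge (Ω : ℕ) (lam : ℤ → ℝ) (c : ℕ → ℝ) (hl : ∀ l, 0 ≤ lam l)
    (hc : ∀ k, 0 ≤ c k) (j : ℕ) : lam 0 * c j ≤ wSeq Ω lam c j := by
  unfold wSeq
  have hmem : (j : ℤ) ∈ Finset.Icc ((j : ℤ) - (Ω : ℤ)) ((j : ℤ) + (Ω : ℤ)) := by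
    rw [Finset.mem_Icc]; omega
  have hnn : ∀ j' ∈ Finset.Icc ((j : ℤ) - (Ω : ℤ)) ((j : ℤ) + (Ω : ℤ)),
      0 ≤ lam (j' - (j : ℤ)) * (if 0 ≤ j' then |c j'.toNat| else 0) := by
    intro j' _
    apply mul_nonneg (hl _)
    split
    · exact abs_nonneg _
    · exact le_refl 0
  have := Finset.single_le_sum hnn hmem
  simpa [abs_of_nonneg (hc j)] using this

lemma wSeq_le_upper (Ω : ℕ) (lam : ℤ → ℝ) (c : ℕ → ℝ) (hl : ∀ l, 0 ≤ lam l)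
    (hc : ∀ k, 0 ≤ c k) (hcanti : Antitone c) (j : ℕ) :
    wSeq Ω lam c j ≤ (∑ l ∈ Finset.Icc (-(Ω : ℤ)) (Ω : ℤ), lam l) * c (j - Ω) := by
  unfold wSeq
  have h1 : ∀ j' ∈ Finset.Icc ((j : ℤ) - (Ω : ℤ)) ((j : ℤ) + (Ω : ℤ)),
      lam (j' - (j : ℤ)) * (if 0 ≤ j' then |c j'.toNat| else 0) ≤
        lam (j' - (j : ℤ)) * c (j - Ω) := by
    intro j' hj'
    rw [Finset.mem_Icc] at hj'
    apply mul_le_mul_of_nonneg_left _ (hl _)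
    split
    · rw [abs_of_nonneg (hc _)]
      exact hcanti (by omega)
    · exact hc _
  refine le_trans (Finset.sum_le_sum h1) (le_of_eq ?_)
  rw [← Finset.sum_mul]
  congr 1
  rw [show Finset.Icc ((j : ℤ) - (Ω : ℤ)) ((j : ℤ) + (Ω : ℤ)) =
      Finset.Icc ((j : ℤ) + -(Ω : ℤ)) ((j : ℤ) + (Ω : ℤ)) by rw [sub_eq_add_neg],
    ← Finset.map_add_left_Icc, Finset.sum_map]
  simp [addLeftEmbedding]

end Aux

/-- Lemma 1 of the paper. For a banded non-negative Toeplitz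
weight `Λ` with bandwidth `Ω` and `p ∈ (0,∞)`, `q ∈ (0,∞]`, there is `C > 0`
such that for every non-increasing non-negative `{c_k} ∈ ℓ_q^p` and every
bijection `π_Λ` making the weighted sequence `{c^Λ_{π_Λ(k)}}` non-increasing,
the tail estimate
`‖{c_{π_Λ(k)}}_{k=m+1}^∞‖_{ℓ_q^p} ≤ C ‖{c_k}_{k=m+1-Ω}^∞‖_{ℓ_q^p}` holds for
all `m ≥ Ω`. -/
theorem weighted_tail_estimate
    (Ω : ℕ) (lam : ℤ → ℝ) (hlam : IsBandedWeight Ω lam)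
    (p : ℝ) (hp : 0 < p) (q : ℝ≥0∞) (hq : 0 < q) :
    ∃ C : ℝ≥0∞, 0 < C ∧ C ≠ ∞ ∧
      ∀ c : ℕ → ℝ, (∀ k, 0 ≤ c k) → Antitone c → lorentzNorm' p q c ≠ ∞ →
        ∀ π : Equiv.Perm ℕ, (Antitone fun k => wSeq Ω lam c (π k)) →
          ∀ m : ℕ, Ω ≤ m →
            lorentzNorm' p q (fun k => c (π (k + m))) ≤
              C * lorentzNorm' p q (fun k => c (k + (m - Ω))) := by
  obtain ⟨hl0, hl0pos, _⟩ := hlam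
  set S : ℝ := ∑ l ∈ Finset.Icc (-(Ω : ℤ)) (Ω : ℤ), lam l with hS
  have hSlam : lam 0 ≤ S := by
    apply Finset.single_le_sum (fun l _ => hl0 l)
    rw [Finset.mem_Icc]; omega
  set r : ℝ := S / lam 0 with hr
  have hr1 : 1 ≤ r := (one_le_div hl0pos).2 hSlam
  refine ⟨ENNReal.ofReal r, ENNReal.ofReal_pos.2 (lt_of_lt_of_le one_pos hr1),
    ENNReal.ofReal_ne_top, ?_⟩
  intro c hc hcanti _ π hπ m hm
  have hS0 : 0 ≤ S := le_trans hl0pos.le hSlam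
  -- pointwise real bound
  have keyR : ∀ n, m ≤ n → c (π n) ≤ r * c (n - Ω) := by
    intro n _
    obtain ⟨i, hi_le, hi_ge⟩ : ∃ i, i ≤ n ∧ n ≤ π i := by
      by_contra hcon
      push_neg at hcon
      have hsub : (Finset.range (n + 1)).image π ⊆ Finset.range n := by
        intro x hx
        simp only [Finset.mem_image, Finset.mem_range] at hx ⊢
        obtain ⟨i, hi, rfl⟩ := hx
        exact hcon i (Nat.lt_succ_iff.1 hi)
      have hcard := Finset.card_le_card hsub
      rw [Finset.card_image_of_injective _ π.injective, Finset.card_range,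
        Finset.card_range] at hcard
      omega
    have h1 : lam 0 * c (π n) ≤ wSeq Ω lam c (π n) := wSeq_ge Ω lam c hl0 hc _
    have h2 : wSeq Ω lam c (π n) ≤ wSeq Ω lam c (π i) := hπ hi_le
    have h3 : wSeq Ω lam c (π i) ≤ S * c (π i - Ω) := wSeq_le_upper Ω lam c hl0 hc hcanti _
    have h4 : c (π i - Ω) ≤ c (n - Ω) := hcanti (by omega)
    have h5 : lam 0 * c (π n) ≤ S * c (n - Ω) := by
      calc lam 0 * c (π n) ≤ S * c (π i - Ω) := le_trans h1 (le_trans h2 h3)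
        _ ≤ S * c (n - Ω) := mul_le_mul_of_nonneg_left h4 hS0
    rw [hr, div_mul_eq_mul_div, le_div_iff₀ hl0pos]
    linarith
  -- pointwise ENNReal bound
  have hpt : ∀ k, (‖c (π (k + m))‖₊ : ℝ≥0∞) ≤
      ENNReal.ofReal r * (‖c (k + (m - Ω))‖₊ : ℝ≥0∞) := by
    intro k
    have h0 := keyR (k + m) (by omega)
    have heq : k + m - Ω = k + (m - Ω) := by omega
    rw [heq] at h0
    rw [← enorm_eq_nnnorm, ← enorm_eq_nnnorm, Real.enorm_eq_ofReal (hc _), Real.enorm_eq_ofReal (hc _),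
      ← ENNReal.ofReal_mul (by linarith : (0:ℝ) ≤ r)]
    exact ENNReal.ofReal_le_ofReal h0
  unfold lorentzNorm'
  apply lorentzNorm_le_mul hq ENNReal.ofReal_ne_top
  intro i
  calc dRearr (fun k => (‖c (π (k + m))‖₊ : ℝ≥0∞)) i
      ≤ dRearr (fun k => ENNReal.ofReal r * (‖c (k + (m - Ω))‖₊ : ℝ≥0∞)) i :=
        dRearr_mono hpt i
    _ ≤ ENNReal.ofReal r * dRearr (fun k => (‖c (k + (m - Ω))‖₊ : ℝ≥0∞)) i :=
        dRearr_const_mul_le (ENNReal.ofReal_pos.2 (lt_of_lt_of_le one_pos hr1)).ne'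
          ENNReal.ofReal_ne_top _ i
end

section
/- Let X be a Banach space, D = {g_k}_{k∈ℕ} a complete dictionary for X, Λ a banded non-negative Toeplitz matrix with bandwidth Ω ∈ ℕ, and α ∈ (0,∞), q ∈ (0,∞]. Then T_q^α(D,X,Λ) embeds continuously into the approximation space A_q^α(D,X): there is a constant C such that ‖f‖_{A_q^α(D,X)} ≤ C ‖f‖_{T_q^α(D,X,Λ)} for all f ∈ T_q^α(D,X,Λ). -/
open scoped ENNReal NNReal
open Finset

lemma dRearr_le_of_antitone {a : ℕ → ℝ≥0∞} (ha : Antitone a) (i : ℕ) :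
    dRearr a i ≤ a i := by
  apply sInf_le
  have hsub : {k : ℕ | a i < a k} ⊆ ↑(Finset.range i) := by
    intro k hk
    simp only [Finset.coe_range, Set.mem_Iio]
    by_contra h
    exact absurd (ha (not_lt.mp h)) (not_le.mpr hk)
  calc ({k : ℕ | a i < a k}).encard ≤ (↑(Finset.range i) : Set ℕ).encard :=
        Set.encard_mono hsub
    _ = (i : ℕ∞) := by rw [Set.encard_coe_eq_coe_finsetCard, Finset.card_range]

lemma sigmaE_le_perm {X : Type*} [NormedAddCommGroup X] [NormedSpace ℂ X]
    (g : ℕ → X) (f : X) (c : ℕ → ℂ) (π : Equiv.Perm ℕ) (m : ℕ) :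
    sigmaE g m f ≤
      (‖f - ∑ k ∈ Finset.range m, c (π k) • g (π k)‖₊ : ℝ≥0∞) := by
  have hcard : ((Finset.range m).image π).card ≤ m := by
    rw [Finset.card_image_of_injective _ π.injective, Finset.card_range]
  have hsum : ∑ k ∈ (Finset.range m).image π, c k • g k
      = ∑ k ∈ Finset.range m, c (π k) • g (π k) := by
    rw [Finset.sum_image (fun x _ y _ h => π.injective h)]
  calc sigmaE g m f ≤ ⨅ (c' : ℕ → ℂ),
        (‖f - ∑ k ∈ (Finset.range m).image π, c' k • g k‖₊ : ℝ≥0∞) :=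
        iInf₂_le ((Finset.range m).image π) hcard
    _ ≤ (‖f - ∑ k ∈ (Finset.range m).image π, c k • g k‖₊ : ℝ≥0∞) := iInf_le _ c
    _ = _ := by rw [hsum]

lemma sigmaE_antitone {X : Type*} [NormedAddCommGroup X] [NormedSpace ℂ X]
    (g : ℕ → X) (f : X) : Antitone fun m => sigmaE g m f := by
  intro i j hij
  exact le_iInf₂ fun s hs => iInf₂_le s (hs.trans hij)

/-- the embedding `T_q^α(D,X,Λ) ↪ A_q^α(D,X)`:
`‖f‖_{A_q^α(D,X)} ≤ C ‖f‖_{T_q^α(D,X,Λ)}` for all `f ∈ T_q^α(D,X,Λ)`. -/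
theorem T_embeds_in_A
    {X : Type*} [NormedAddCommGroup X] [NormedSpace ℂ X] [CompleteSpace X]
    (g : ℕ → X) (hdict : IsDictionary g)
    (Ω : ℕ) (lam : ℤ → ℝ) (hlam : IsBandedWeight Ω lam)
    (α : ℝ) (hα : 0 < α) (q : ℝ≥0∞) (hq : 0 < q) :
    ∃ C : ℝ≥0∞, 0 < C ∧ C ≠ ∞ ∧ ∀ f : X, TNorm g Ω lam α q f ≠ ∞ →
      ANorm g α q f ≤ C * TNorm g Ω lam α q f := by
  refine ⟨1, zero_lt_one, ENNReal.one_ne_top, fun f _ => ?_⟩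
  rw [one_mul]
  unfold ANorm TNorm
  refine add_le_add_left ?_ _
  refine le_iInf fun c => le_iInf fun π => le_iInf fun _ => ?_
  set a : ℕ → ℝ≥0∞ := fun i => sigmaE g (i + 1) f with ha
  set e : ℕ → ℝ≥0∞ :=
    fun m => (‖f - ∑ k ∈ Finset.range m, c (π k) • g (π k)‖₊ : ℝ≥0∞) with he
  have haA : Antitone a := fun i j hij => sigmaE_antitone g f (by omega)
  have hA : ∀ i, dRearr a i ≤ e (i + 1) := fun i =>
    (dRearr_le_of_antitone haA i).trans (sigmaE_le_perm g f c π (i + 1))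
  unfold lorentzNorm errPow
  rw [one_div_one_div]
  split
  · exact iSup_mono fun i => mul_le_mul_right (hA i) _
  · refine ENNReal.rpow_le_rpow ?_ (by positivity)
    refine ENNReal.tsum_le_tsum fun i => ?_
    exact ENNReal.div_le_div_right
      (ENNReal.rpow_le_rpow (mul_le_mul_right (hA i) _) ENNReal.toReal_nonneg) _
end
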